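/- Let C(n, M, k) denote the number of integer vectors (x_1,...,x_n) with 0 ≤ x_i ≤ c_i and Σ x_i = k, where M = (Σ c_i)/2. Then for every k, C(n, M+k) = C(n, M−k) (the count is symmetric about M), and C is maximized at ⌊M⌋ (and ⌈M⌉). -/
import Mathlib


open Finset

private def cnt {n : ℕ} (c : Fin n → ℕ) (s : ℕ) : ℕ :=
  ((Fintype.piFinset fun i => Finset.range (c i + 1)).filter
      (fun x => ∑ i, x i = s)).card

private lemma cnt_eq_zero {n : ℕ} {c : Fin n → ℕ} {s : ℕ} (h : ∑ i, c i < s) :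
    cnt c s = 0 := by
  rw [cnt, Finset.card_eq_zero, Finset.filter_eq_empty_iff]
  intro x hx
  rw [Fintype.mem_piFinset] at hx
  intro hs
  have hle : ∑ i, x i ≤ ∑ i, c i :=
    Finset.sum_le_sum fun i _ => Nat.lt_succ_iff.mp (Finset.mem_range.mp (hx i))
  omega

private lemma cnt_symm {n : ℕ} (c : Fin n → ℕ) (s : ℕ) (hs : s ≤ ∑ i, c i) :
    cnt c s = cnt c (∑ i, c i - s) := by
  apply Finset.card_bij' (fun x _ => fun i => c i - x i) (fun y _ => fun i => c i - y i)
  · intro x hx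
    rw [Finset.mem_filter, Fintype.mem_piFinset] at hx ⊢
    obtain ⟨hmem, hsum⟩ := hx
    have hle : ∀ i, x i ≤ c i := fun i => Nat.lt_succ_iff.mp (Finset.mem_range.mp (hmem i))
    constructor
    · intro i; exact Finset.mem_range.mpr (by omega)
    · have key : ∑ i, (c i - x i) + ∑ i, x i = ∑ i, c i := by
        rw [← Finset.sum_add_distrib]
        exact Finset.sum_congr rfl fun i _ => Nat.sub_add_cancel (hle i)
      beta_reduce
      omega
  · intro y hy
    rw [Finset.mem_filter, Fintype.mem_piFinset] at hy ⊢
    obtain ⟨hmem, hsum⟩ := hy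
    have hle : ∀ i, y i ≤ c i := fun i => Nat.lt_succ_iff.mp (Finset.mem_range.mp (hmem i))
    constructor
    · intro i; exact Finset.mem_range.mpr (by omega)
    · have key : ∑ i, (c i - y i) + ∑ i, y i = ∑ i, c i := by
        rw [← Finset.sum_add_distrib]
        exact Finset.sum_congr rfl fun i _ => Nat.sub_add_cancel (hle i)
      beta_reduce
      omega
  · intro x hx
    rw [Finset.mem_filter, Fintype.mem_piFinset] at hx
    obtain ⟨hmem, _⟩ := hx
    funext i
    have hle : x i ≤ c i := Nat.lt_succ_iff.mp (Finset.mem_range.mp (hmem i))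
    beta_reduce
    omega
  · intro y hy
    rw [Finset.mem_filter, Fintype.mem_piFinset] at hy
    obtain ⟨hmem, _⟩ := hy
    funext i
    have hle : y i ≤ c i := Nat.lt_succ_iff.mp (Finset.mem_range.mp (hmem i))
    beta_reduce
    omega

private lemma cnt_cons {n : ℕ} (a : ℕ) (c : Fin n → ℕ) (s : ℕ) :
    cnt (Fin.cons a c) s = ∑ t ∈ Finset.Icc (s - a) s, cnt c t := by
  simp only [cnt]
  rw [← Finset.card_sigma]
  refine Finset.card_bij'
    (fun x _ => (⟨∑ i, Fin.tail x i, Fin.tail x⟩ : Σ _ : ℕ, (Fin n → ℕ)))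
    (fun p _ => Fin.cons (s - p.1) p.2) ?hi ?hj ?left ?right
  case hi =>
    intro x hx
    rw [Finset.mem_filter, Fintype.mem_piFinset] at hx
    obtain ⟨hmem, hsum⟩ := hx
    have h0 : x 0 < a + 1 := Finset.mem_range.mp (by simpa using hmem 0)
    have hsplit : ∑ i, x i = x 0 + ∑ i, Fin.tail x i := by
      rw [Fin.sum_univ_succ]; rfl
    rw [Finset.mem_sigma]
    dsimp only
    constructor
    · rw [Finset.mem_Icc]; omega
    · rw [Finset.mem_filter, Fintype.mem_piFinset]
      refine ⟨fun i => ?_, rfl⟩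
      have := hmem i.succ
      rwa [Fin.cons_succ] at this
  case hj =>
    rintro ⟨t, y⟩ hp
    rw [Finset.mem_sigma, Finset.mem_Icc] at hp
    dsimp only at hp
    obtain ⟨⟨ht1, ht2⟩, hy⟩ := hp
    rw [Finset.mem_filter, Fintype.mem_piFinset] at hy
    obtain ⟨hmem, hsum⟩ := hy
    rw [Finset.mem_filter, Fintype.mem_piFinset]
    constructor
    · intro i
      refine Fin.cases ?_ ?_ i
      · simp only [Fin.cons_zero]
        exact Finset.mem_range.mpr (by omega)
      · intro j
        simpa using hmem j
    · rw [Fin.sum_univ_succ]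
      simp only [Fin.cons_zero, Fin.cons_succ]
      have h1 : ∑ i, y i = t := hsum
      omega
  case left =>
    intro x hx
    rw [Finset.mem_filter, Fintype.mem_piFinset] at hx
    obtain ⟨hmem, hsum⟩ := hx
    have hsplit : ∑ i, x i = x 0 + ∑ i, Fin.tail x i := by
      rw [Fin.sum_univ_succ]; rfl
    have h0 : x 0 = s - ∑ i, Fin.tail x i := by omega
    show Fin.cons (s - ∑ i, Fin.tail x i) (Fin.tail x) = x
    rw [← h0, Fin.cons_self_tail]
  case right =>
    rintro ⟨t, y⟩ hp
    rw [Finset.mem_sigma, Finset.mem_Icc] at hp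
    dsimp only at hp
    obtain ⟨⟨ht1, ht2⟩, hy⟩ := hp
    rw [Finset.mem_filter, Fintype.mem_piFinset] at hy
    obtain ⟨hmem, hsum⟩ := hy
    have h1 : ∑ i, y i = t := hsum
    simp only [Fin.tail_cons, h1]

private lemma cnt_mono_of {n : ℕ} (c : Fin n → ℕ)
    (hstep : ∀ s, 2 * s + 1 ≤ ∑ i, c i → cnt c s ≤ cnt c (s + 1)) :
    ∀ u v, u ≤ v → u + v ≤ ∑ i, c i → cnt c u ≤ cnt c v := by
  have chain : ∀ j k, j ≤ k → 2 * k ≤ ∑ i, c i → cnt c j ≤ cnt c k := by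
    intro j k hjk
    induction k, hjk using Nat.le_induction with
    | base => intro _; exact le_refl _
    | succ k hk ih =>
      intro h2
      exact le_trans (ih (by omega)) (hstep k (by omega))
  intro u v huv hsum
  have hvT : v ≤ ∑ i, c i := by omega
  rcases le_or_gt v (∑ i, c i - v) with h | h
  · exact chain u v huv (by omega)
  · calc cnt c u ≤ cnt c (∑ i, c i - v) := chain u _ (by omega) (by omega)
      _ = cnt c v := by
          rw [cnt_symm c v hvT]
  -- done

private lemma cnt_step : ∀ {n : ℕ} (c : Fin n → ℕ) (s : ℕ),
    2 * s + 1 ≤ ∑ i, c i → cnt c s ≤ cnt c (s + 1) := by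
  intro n
  induction n with
  | zero => intro c s h; simp at h
  | succ n ih =>
    intro c s h
    have hsum : ∑ i, c i = c 0 + ∑ i, Fin.tail c i := by
      rw [Fin.sum_univ_succ]; rfl
    rw [← Fin.cons_self_tail c, cnt_cons, cnt_cons]
    set a := c 0 with ha
    set d := Fin.tail c with hd
    rcases le_or_gt (s + 1) a with hcase | hcase
    · have e1 : s - a = 0 := by omega
      have e2 : s + 1 - a = 0 := by omega
      rw [e1, e2]
      exact Finset.sum_le_sum_of_subset (Finset.Icc_subset_Icc_right (by omega))
    · have has : a ≤ s := by omega
      have e2 : s + 1 - a = (s - a) + 1 := by omega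
      rw [Finset.sum_Icc_succ_top (by omega : s + 1 - a ≤ s + 1), e2,
        Finset.Icc_add_one_left_eq_Ioc, Finset.Icc_eq_cons_Ioc (by omega : s - a ≤ s),
        Finset.sum_cons]
      have hm : cnt d (s - a) ≤ cnt d (s + 1) := by
        apply cnt_mono_of d (fun t ht => ih d t ht) (s - a) (s + 1) (by omega)
        omega
      omega

/-- For positive capacities `c_1, …, c_n`, let `C s` be the number of integer
tuples `(x_1, …, x_n)` with `0 ≤ x_i ≤ c_i` and `Σ x_i = s`.  Then `C` is
symmetric about `M = (Σ c_i)/2`, i.e. `C s = C (Σ c_i − s)` for all `s ≤ Σ c_i`,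
and `C` is maximized at `⌊M⌋ = (Σ c_i)/2` (natural-number division). -/
theorem bounded_compositions_symmetric_and_unimodal {n : ℕ} (c : Fin n → ℕ)
    (hc : ∀ i, 0 < c i)
    (C : ℕ → ℕ)
    (hC : ∀ s, C s = ((Fintype.piFinset fun i => Finset.range (c i + 1)).filter
      (fun x => ∑ i, x i = s)).card) :
    (∀ s ≤ ∑ i, c i, C s = C ((∑ i, c i) - s)) ∧
    (∀ s, C s ≤ C ((∑ i, c i) / 2)) := by
  have e : ∀ s, C s = cnt c s := hC
  constructor
  · intro s hs
    rw [e, e]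
    exact cnt_symm c s hs
  · intro s
    rw [e, e]
    have hmono := cnt_mono_of c (fun t ht => cnt_step c t ht)
    rcases le_or_gt s (∑ i, c i) with hsT | hsT
    · rcases le_or_gt s ((∑ i, c i) / 2) with h | h
      · exact hmono s _ h (by omega)
      · calc cnt c s = cnt c ((∑ i, c i) - s) := cnt_symm c s hsT
          _ ≤ cnt c ((∑ i, c i) / 2) := hmono _ _ (by omega) (by omega)
    · rw [cnt_eq_zero hsT]
      exact Nat.zero_le _
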